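/- Let Γ be a GQ of order (q²,q) with doubly subtended subquadrangle Γ' of order (q,q) and R a nontrivial relative m-cover (0 < m < q). If σ is the involutory automorphism fixing Γ' pointwise, then q is even, m = q/2, and R^σ is the complement of R in the set of external lines. -/

import Mathlib

structure GenQuad (P L : Type*) (I : P → L → Prop) (s t : ℕ) : Prop where
  unique_line : ∀ ⦃p q : P⦄, p ≠ q → ∀ ⦃l m : L⦄, I p l → I q l → I p m → I q m → l = m
  point_lines : ∀ p : P, {l : L | I p l}.ncard = t + 1
  line_points : ∀ l : L, {p : P | I p l}.ncard = s + 1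
  gq : ∀ (p : P) (l : L), ¬ I p l → ∃! r : P, I r l ∧ ∃ m : L, I p m ∧ I r m

set_option linter.unusedSectionVars false
namespace GQAux

/-- collinearity of two points -/
def Col {P L : Type*} (I : P → L → Prop) (a b : P) : Prop := ∃ l, I a l ∧ I b l

lemma col_symm {P L : Type*} {I : P → L → Prop} {a b : P} (h : Col I a b) : Col I b a := by
  obtain ⟨l, h1, h2⟩ := h; exact ⟨l, h2, h1⟩

section Helpers
variable {α β : Type*} [Fintype α] [Fintype β]

lemma ncard_eq_filter (p : α → Prop) [DecidablePred p] :
    {x | p x}.ncard = (Finset.univ.filter p).card := by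
  rw [Set.ncard_eq_toFinset_card', Set.toFinset_setOf]

lemma ncard_eq_one_of_exists_unique {p : α → Prop} (h : ∃! x, p x) : {x | p x}.ncard = 1 := by
  obtain ⟨x, hx, hu⟩ := h
  have : {y | p y} = {x} := by
    ext y; simp only [Set.mem_setOf_eq, Set.mem_singleton_iff]
    exact ⟨fun h => hu y h, fun h => h ▸ hx⟩
  rw [this, Set.ncard_singleton]

lemma ncard_eq_zero_iff {p : α → Prop} : {x | p x}.ncard = 0 ↔ ∀ x, ¬ p x := by
  rw [Set.ncard_eq_zero (Set.toFinite _)]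
  constructor
  · intro h x hx; have : x ∈ {x | p x} := hx; rw [h] at this; exact this
  · intro h; ext x; simp [h x]

lemma ncard_eq_zero_of_not {p : α → Prop} (h : ∀ x, ¬ p x) : {x | p x}.ncard = 0 :=
  ncard_eq_zero_iff.2 h

/-- the fundamental double count -/
lemma double_count (r : α → β → Prop) :
    ∑ a : α, {b | r a b}.ncard = ∑ b : β, {a | r a b}.ncard := by
  classical
  have h1 : ∀ a, {b | r a b}.ncard = ∑ b : β, (if r a b then 1 else 0) := by
    intro a; rw [ncard_eq_filter, Finset.card_filter]
  have h2 : ∀ b, {a | r a b}.ncard = ∑ a : α, (if r a b then 1 else 0) := by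
    intro b; rw [ncard_eq_filter, Finset.card_filter]
  simp_rw [h1, h2]
  exact Finset.sum_comm

lemma sum_ite_ncard (D : Set α) (c : ℕ) [DecidablePred (· ∈ D)] :
    ∑ a : α, (if a ∈ D then c else 0) = D.ncard * c := by
  classical
  rw [Set.ncard_eq_toFinset_card', ← Finset.sum_filter, Finset.sum_const, smul_eq_mul]
  congr 2
  ext x; simp

/-- evaluate a sum of fiber cardinalities when each fiber is constant on a set -/
lemma sum_fiber_const {r : α → β → Prop} {D : Set α} {c : ℕ}
    (h1 : ∀ a ∈ D, {b | r a b}.ncard = c) (h2 : ∀ a, a ∉ D → {b | r a b}.ncard = 0) :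
    ∑ a : α, {b | r a b}.ncard = D.ncard * c := by
  classical
  rw [← sum_ite_ncard D c]
  apply Finset.sum_congr rfl
  intro a _
  by_cases ha : a ∈ D
  · simp [ha, h1 a ha]
  · simp [ha, h2 a ha]

lemma all_eq_one {F : Finset α} {f : α → ℕ} (hle : ∀ x ∈ F, f x ≤ 1)
    (hsum : ∑ x ∈ F, f x = F.card) : ∀ x ∈ F, f x = 1 := by
  by_contra h
  push_neg at h
  obtain ⟨x₀, hx₀, hne⟩ := h
  have hlt : f x₀ < 1 := lt_of_le_of_ne (hle _ hx₀) hne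
  have h2 : ∑ x ∈ F, f x < ∑ x ∈ F, 1 := Finset.sum_lt_sum (fun i hi => hle i hi) ⟨x₀, hx₀, hlt⟩
  rw [hsum, Finset.sum_const, smul_eq_mul, mul_one] at h2
  exact lt_irrefl _ h2

lemma sum_ite_ite (A : Set α) (p : α → Prop) [DecidablePred (· ∈ A)] [DecidablePred p] :
    ∑ a : α, (if a ∈ A then (if p a then 1 else 0) else 0) = {a | a ∈ A ∧ p a}.ncard := by
  classical
  rw [ncard_eq_filter, Finset.card_filter]
  apply Finset.sum_congr rfl
  intro a _
  by_cases h1 : a ∈ A <;> by_cases h2 : p a <;> simp [h1, h2]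

lemma sum_ite_const_int (D : Set α) (c : ℤ) [DecidablePred (· ∈ D)] :
    ∑ a : α, (if a ∈ D then c else 0) = (D.ncard : ℤ) * c := by
  classical
  rw [← Finset.sum_filter, Finset.sum_const, nsmul_eq_mul]
  have h : D.ncard = (Finset.filter (fun a => a ∈ D) Finset.univ).card := by
    rw [Set.ncard_eq_toFinset_card']
    congr 1
    ext a
    simp
  rw [h]

end Helpers

section Basic
variable {P L : Type*} [Fintype P] [Fintype L] {I : P → L → Prop} {s t : ℕ}

lemma exists_line (G : GenQuad P L I s t) (p : P) : ∃ l, I p l := by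
  have := G.point_lines p
  have h : {l | I p l}.Nonempty := by
    rw [← Set.ncard_pos (Set.toFinite _), this]; omega
  exact h

lemma exists_point (G : GenQuad P L I s t) (l : L) : ∃ p, I p l := by
  have := G.line_points l
  have h : {p | I p l}.Nonempty := by
    rw [← Set.ncard_pos (Set.toFinite _), this]; omega
  exact h

/-- two distinct lines meet in at most one point -/
lemma pt_unique (G : GenQuad P L I s t) {l m : L} (h : l ≠ m) {a b : P}
    (hal : I a l) (ham : I a m) (hbl : I b l) (hbm : I b m) : a = b := by
  by_contra hab
  exact h (G.unique_line hab hal hbl ham hbm)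

/-- restated GQ axiom -/
lemma gq_col (G : GenQuad P L I s t) {p : P} {l : L} (h : ¬ I p l) :
    ∃! r : P, I r l ∧ Col I p r := G.gq p l h

/-- the dual of a GQ is a GQ -/
lemma dual (G : GenQuad P L I s t) : GenQuad L P (fun l p => I p l) t s := by
  constructor
  · intro l m hlm a b h1 h2 h3 h4
    exact pt_unique G hlm h1 h2 h3 h4
  · exact G.line_points
  · exact G.point_lines
  · intro l p hpl
    obtain ⟨r, ⟨hrl, n, hpn, hrn⟩, hru⟩ := G.gq p l hpl
    have hpr : p ≠ r := fun h => hpl (h ▸ hrl)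
    refine ⟨n, ⟨hpn, r, hrl, hrn⟩, ?_⟩
    rintro n' ⟨hpn', r', hr'l, hr'n'⟩
    have : r' = r := hru r' ⟨hr'l, n', hpn', hr'n'⟩
    subst this
    exact G.unique_line hpr hpn' hr'n' hpn hrn

end Basic
section Counting
variable {P L : Type*} [Fintype P] [Fintype L] {I : P → L → Prop} {s t : ℕ}

lemma ncard_pts_erase (G : GenQuad P L I s t) {r : P} {n : L} (h : I r n) :
    {z | I z n ∧ z ≠ r}.ncard = s := by
  have heq : {z | I z n ∧ z ≠ r} = {z | I z n} \ {r} := by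
    ext z; simp [and_comm]
  have hm : r ∈ {z | I z n} := h
  rw [heq, Set.ncard_diff_singleton_of_mem hm, G.line_points n]
  omega

lemma ncard_lns_erase (G : GenQuad P L I s t) {r : P} {l₀ : L} (h : I r l₀) :
    {n | I r n ∧ n ≠ l₀}.ncard = t := by
  have heq : {n | I r n ∧ n ≠ l₀} = {n | I r n} \ {l₀} := by
    ext z; simp [and_comm]
  have hm : l₀ ∈ {n | I r n} := h
  rw [heq, Set.ncard_diff_singleton_of_mem hm, G.point_lines r]
  omega

lemma off_fiber (G : GenQuad P L I s t) {r : P} {l₀ : L} (hr : I r l₀) :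
    {z | ¬ I z l₀ ∧ Col I z r}.ncard = t * s := by
  have key := double_count (fun (z : P) (n : L) => (I r n ∧ n ≠ l₀) ∧ (I z n ∧ z ≠ r))
  have rhs : ∑ n : L, {z | (I r n ∧ n ≠ l₀) ∧ (I z n ∧ z ≠ r)}.ncard = t * s := by
    rw [sum_fiber_const (D := {n | I r n ∧ n ≠ l₀}) (c := s), ncard_lns_erase G hr]
    · intro n hn
      obtain ⟨hn1, hn2⟩ := hn
      have : {z | (I r n ∧ n ≠ l₀) ∧ (I z n ∧ z ≠ r)} = {z | I z n ∧ z ≠ r} := by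
        ext z; simp only [Set.mem_setOf_eq]; tauto
      rw [this]; exact ncard_pts_erase G hn1
    · intro n hn
      apply ncard_eq_zero_of_not; intro z hz; exact hn hz.1
  have lhs : ∑ z : P, {n | (I r n ∧ n ≠ l₀) ∧ (I z n ∧ z ≠ r)}.ncard
      = {z | ¬ I z l₀ ∧ Col I z r}.ncard * 1 := by
    apply sum_fiber_const
    · rintro z ⟨hzl, n, hzn, hrn⟩
      apply ncard_eq_one_of_exists_unique
      have hzr : z ≠ r := fun h => hzl (h ▸ hr)
      refine ⟨n, ⟨⟨hrn, fun h => hzl (h ▸ hzn)⟩, hzn, hzr⟩, ?_⟩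
      rintro n' ⟨⟨hrn', _⟩, hzn', _⟩
      exact G.unique_line hzr hzn' hrn' hzn hrn
    · intro z hz
      apply ncard_eq_zero_of_not
      rintro n ⟨⟨hrn, hnl⟩, hzn, hzr⟩
      apply hz
      constructor
      · intro hzl
        exact hnl (G.unique_line hzr hzn hrn hzl hr)
      · exact ⟨n, hzn, hrn⟩
  rw [lhs, mul_one] at key; exact key.trans rhs

lemma card_points (G : GenQuad P L I s t) (hP : Nonempty P) :
    Nat.card P = (s+1) * (s*t+1) := by
  obtain ⟨p₀⟩ := hP
  obtain ⟨l₀, hl₀⟩ := exists_line G p₀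
  have hsplit : {p | I p l₀}.ncard + {p | ¬ I p l₀}.ncard = Nat.card P := by
    have : {p | ¬ I p l₀} = {p | I p l₀}ᶜ := rfl
    rw [this, Set.ncard_add_ncard_compl]
  have hB : {p | ¬ I p l₀}.ncard = (s+1) * (t*s) := by
    have key := double_count (fun (z : P) (r : P) => ¬ I z l₀ ∧ (I r l₀ ∧ Col I z r))
    have lhs : ∑ z : P, {r | ¬ I z l₀ ∧ (I r l₀ ∧ Col I z r)}.ncard
        = {p | ¬ I p l₀}.ncard * 1 := by
      apply sum_fiber_const
      · intro z hz
        apply ncard_eq_one_of_exists_unique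
        obtain ⟨r, ⟨hrl, hcol⟩, hru⟩ := gq_col G hz
        exact ⟨r, ⟨hz, hrl, hcol⟩, fun r' h => hru r' ⟨h.2.1, h.2.2⟩⟩
      · intro z hz
        apply ncard_eq_zero_of_not
        rintro r ⟨h, _⟩; exact hz h
    have rhs : ∑ r : P, {z | ¬ I z l₀ ∧ (I r l₀ ∧ Col I z r)}.ncard = (s+1) * (t*s) := by
      rw [sum_fiber_const (D := {r | I r l₀}) (c := t*s), G.line_points l₀]
      · intro r hr
        have : {z | ¬ I z l₀ ∧ (I r l₀ ∧ Col I z r)} = {z | ¬ I z l₀ ∧ Col I z r} := by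
          ext z; simp only [Set.mem_setOf_eq]; tauto
        rw [this]; exact off_fiber G hr
      · intro r hr
        apply ncard_eq_zero_of_not
        rintro z ⟨_, h, _⟩; exact hr h
    rw [lhs, mul_one] at key; rw [key]; exact rhs
  have hA : {p | I p l₀}.ncard = s + 1 := G.line_points l₀
  rw [← hsplit, hA, hB]; ring

lemma perp_ncard (G : GenQuad P L I s t) {a b : P} (hab : ¬ Col I a b) :
    {w | Col I w a ∧ Col I w b}.ncard = t + 1 := by
  have key := double_count (fun (w : P) (l : L) => I a l ∧ (I w l ∧ Col I w b))
  have rhs : ∑ l : L, {w | I a l ∧ (I w l ∧ Col I w b)}.ncard = (t+1) * 1 := by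
    rw [← G.point_lines a]
    apply sum_fiber_const
    · intro l hl
      apply ncard_eq_one_of_exists_unique
      have hbl : ¬ I b l := fun h => hab ⟨l, hl, h⟩
      obtain ⟨w, ⟨hwl, hcol⟩, hwu⟩ := gq_col G hbl
      exact ⟨w, ⟨hl, hwl, col_symm hcol⟩, fun w' h => hwu w' ⟨h.2.1, col_symm h.2.2⟩⟩
    · intro l hl
      apply ncard_eq_zero_of_not; rintro w ⟨h, _⟩; exact hl h
  have lhs : ∑ w : P, {l | I a l ∧ (I w l ∧ Col I w b)}.ncard
      = {w | Col I w a ∧ Col I w b}.ncard * 1 := by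
    apply sum_fiber_const
    · rintro w ⟨⟨l, hwl, hal⟩, hwb⟩
      apply ncard_eq_one_of_exists_unique
      have hwa : w ≠ a := by rintro rfl; exact hab hwb
      refine ⟨l, ⟨hal, hwl, hwb⟩, ?_⟩
      rintro l' ⟨hal', hwl', _⟩
      exact G.unique_line hwa hwl' hal' hwl hal
    · intro w hw
      apply ncard_eq_zero_of_not
      rintro l ⟨hal, hwl, hwb⟩
      exact hw ⟨⟨l, hwl, hal⟩, hwb⟩
  rw [lhs, mul_one] at key; rw [key]; rw [rhs, mul_one]

lemma perp_noncol (G : GenQuad P L I s t) {a b : P} (hab : ¬ Col I a b) {w w' : P}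
    (hw : Col I w a ∧ Col I w b) (hw' : Col I w' a ∧ Col I w' b) (hne : w ≠ w') :
    ¬ Col I w w' := by
  rintro ⟨n, hwn, hw'n⟩
  by_cases han : I a n
  · have hbn : ¬ I b n := fun h => hab ⟨n, han, h⟩
    obtain ⟨r, _, hru⟩ := gq_col G hbn
    exact hne ((hru w ⟨hwn, col_symm hw.2⟩).trans (hru w' ⟨hw'n, col_symm hw'.2⟩).symm)
  · obtain ⟨r, _, hru⟩ := gq_col G han
    exact hne ((hru w ⟨hwn, col_symm hw.1⟩).trans (hru w' ⟨hw'n, col_symm hw'.1⟩).symm)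

lemma perp_pt_ncard (G : GenQuad P L I s t) (a : P) :
    {u | Col I u a}.ncard = 1 + (t+1) * s := by
  have key := double_count (fun (u : P) (l : L) => I a l ∧ (I u l ∧ u ≠ a))
  have rhs : ∑ l : L, {u | I a l ∧ (I u l ∧ u ≠ a)}.ncard = (t+1) * s := by
    rw [← G.point_lines a]
    apply sum_fiber_const
    · intro l hl
      have : {u | I a l ∧ (I u l ∧ u ≠ a)} = {u | I u l ∧ u ≠ a} := by
        ext u; simp only [Set.mem_setOf_eq]; tauto
      rw [this]; exact ncard_pts_erase G hl
    · intro l hl; apply ncard_eq_zero_of_not; rintro u ⟨h, _⟩; exact hl h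
  have lhs : ∑ u : P, {l | I a l ∧ (I u l ∧ u ≠ a)}.ncard
      = {u | Col I u a ∧ u ≠ a}.ncard * 1 := by
    apply sum_fiber_const
    · rintro u ⟨⟨l, hul, hal⟩, hua⟩
      apply ncard_eq_one_of_exists_unique
      refine ⟨l, ⟨hal, hul, hua⟩, ?_⟩
      rintro l' ⟨hal', hul', _⟩
      exact G.unique_line hua hul' hal' hul hal
    · intro u hu; apply ncard_eq_zero_of_not
      rintro l ⟨hal, hul, hua⟩; exact hu ⟨⟨l, hul, hal⟩, hua⟩
  rw [lhs, mul_one] at key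
  have hsplit : {u | Col I u a} = insert a {u | Col I u a ∧ u ≠ a} := by
    ext u
    simp only [Set.mem_setOf_eq, Set.mem_insert_iff]
    constructor
    · intro h; by_cases hua : u = a
      · left; exact hua
      · right; exact ⟨h, hua⟩
    · rintro (h | ⟨h, _⟩)
      · rw [h]; obtain ⟨l, hl⟩ := exists_line G a; exact ⟨l, hl, hl⟩
      · exact h
  have hnm : a ∉ {u | Col I u a ∧ u ≠ a} := fun h => h.2 rfl
  rw [hsplit, Set.ncard_insert_of_notMem hnm (Set.toFinite _), key.trans rhs]
  ring

end Counting

section Triad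
variable {P L : Type*} [Fintype P] [Fintype L] {I : P → L → Prop} {s : ℕ}

lemma ncard_offdiag {α : Type*} [Fintype α] (S : Set α) :
    {p : α × α | p.1 ∈ S ∧ p.2 ∈ S ∧ p.1 ≠ p.2}.ncard = S.ncard * (S.ncard - 1) := by
  classical
  have h1 : {p : α × α | p.1 ∈ S ∧ p.2 ∈ S ∧ p.1 ≠ p.2} = ↑(S.toFinset.offDiag) := by
    ext p
    simp [Finset.mem_offDiag]
  rw [h1, Set.ncard_coe_finset, Finset.offDiag_card, Set.ncard_eq_toFinset_card']
  rcases h : S.toFinset.card with _ | k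
  · simp
  · simp only [Nat.succ_sub_one]; ring_nf; omega

variable (hs : 1 ≤ s)

/-- Every triad of pairwise noncollinear points in a GQ of order (s, s²) has exactly
s+1 centers. -/
theorem triad_regular (G : GenQuad P L I s (s^2)) (hs : 1 ≤ s) {x y z : P}
    (hxy : ¬ Col I x y) (hxz : ¬ Col I x z) (hyz : ¬ Col I y z) :
    {w | Col I w x ∧ Col I w y ∧ Col I w z}.ncard = s + 1 := by
  classical
  obtain ⟨t, ht⟩ : ∃ t, t = s^2 := ⟨s^2, rfl⟩
  rw [← ht] at G
  have ht1 : 1 ≤ t := by rw [ht]; nlinarith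
  set T : Set P := {w | Col I w x ∧ Col I w y} with hT
  set Z : Set P := {u | ¬ Col I u x ∧ ¬ Col I u y} with hZ
  set c : P → ℕ := fun u => {w | Col I w x ∧ Col I w y ∧ Col I w u}.ncard with hc
  -- fiber through a center
  have fiberT : ∀ w ∈ T, {u | u ∈ Z ∧ Col I u w}.ncard = (t - 1) * s := by
    rintro w ⟨hwx, hwy⟩
    have hwnx : w ≠ x := by rintro rfl; exact hxy hwy
    have hwny : w ≠ y := by rintro rfl; exact hxy (col_symm hwx)
    obtain ⟨nx, hwnx', hxnx⟩ := id hwx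
    obtain ⟨ny, hwny', hyny⟩ := id hwy
    have hnxy : nx ≠ ny := by rintro rfl; exact hxy ⟨nx, hxnx, hyny⟩
    have key := double_count (fun (u : P) (n : L) =>
      (I w n ∧ ¬ I x n ∧ ¬ I y n) ∧ (I u n ∧ u ≠ w))
    have hD : {n | I w n ∧ ¬ I x n ∧ ¬ I y n} = {n | I w n} \ {nx, ny} := by
      ext n
      simp only [Set.mem_setOf_eq, Set.mem_diff, Set.mem_insert_iff, Set.mem_singleton_iff]
      constructor
      · rintro ⟨h1, h2, h3⟩
        exact ⟨h1, by rintro (rfl | rfl); exacts [h2 hxnx, h3 hyny]⟩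
      · rintro ⟨h1, h2⟩
        refine ⟨h1, fun hxn => ?_, fun hyn => ?_⟩
        · exact h2 (Or.inl (G.unique_line hwnx h1 hxn hwnx' hxnx))
        · exact h2 (Or.inr (G.unique_line hwny h1 hyn hwny' hyny))
    have hDcard : {n | I w n ∧ ¬ I x n ∧ ¬ I y n}.ncard = t - 1 := by
      rw [hD, Set.ncard_diff (by rintro n (rfl | rfl) <;> simpa) (Set.toFinite _),
        G.point_lines w, Set.ncard_pair hnxy]
      omega
    have rhs : ∑ n : L, {u | (I w n ∧ ¬ I x n ∧ ¬ I y n) ∧ (I u n ∧ u ≠ w)}.ncard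
        = (t - 1) * s := by
      rw [← hDcard]
      apply sum_fiber_const
      · rintro n ⟨h1, h2, h3⟩
        have : {u | (I w n ∧ ¬ I x n ∧ ¬ I y n) ∧ (I u n ∧ u ≠ w)}
            = {u | I u n ∧ u ≠ w} := by
          ext u; simp only [Set.mem_setOf_eq]; tauto
        rw [this]; exact ncard_pts_erase G h1
      · intro n hn; apply ncard_eq_zero_of_not; rintro u ⟨h, _⟩; exact hn h
    have lhs : ∑ u : P, {n | (I w n ∧ ¬ I x n ∧ ¬ I y n) ∧ (I u n ∧ u ≠ w)}.ncard
        = {u | u ∈ Z ∧ Col I u w}.ncard * 1 := by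
      apply sum_fiber_const
      · rintro u ⟨⟨hunx, huny⟩, n, hun, hwn⟩
        apply ncard_eq_one_of_exists_unique
        have huw : u ≠ w := by rintro rfl; exact hunx hwx
        refine ⟨n, ⟨⟨hwn, fun hxn => hunx ⟨n, hun, hxn⟩, fun hyn => huny ⟨n, hun, hyn⟩⟩,
          hun, huw⟩, ?_⟩
        rintro n' ⟨⟨hwn', _, _⟩, hun', _⟩
        exact G.unique_line huw hun' hwn' hun hwn
      · intro u hu
        apply ncard_eq_zero_of_not
        rintro n ⟨⟨hwn, hxn, hyn⟩, hun, huw⟩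
        apply hu
        refine ⟨⟨fun hcux => ?_, fun hcuy => ?_⟩, ⟨n, hun, hwn⟩⟩
        · obtain ⟨r, _, hru⟩ := gq_col G hxn
          exact huw ((hru u ⟨hun, col_symm hcux⟩).trans (hru w ⟨hwn, col_symm hwx⟩).symm)
        · obtain ⟨r, _, hru⟩ := gq_col G hyn
          exact huw ((hru u ⟨hun, col_symm hcuy⟩).trans (hru w ⟨hwn, col_symm hwy⟩).symm)
    rw [lhs, mul_one] at key
    exact key.trans rhs
  -- first moment
  have E1 : ∑ u : P, (if u ∈ Z then c u else 0) = (t + 1) * ((t - 1) * s) := by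
    have key := double_count (fun (u : P) (w : P) =>
      (u ∈ Z) ∧ (w ∈ T ∧ Col I u w))
    have lhs : ∑ u : P, {w | (u ∈ Z) ∧ (w ∈ T ∧ Col I u w)}.ncard
        = ∑ u : P, (if u ∈ Z then c u else 0) := by
      apply Finset.sum_congr rfl
      intro u _
      by_cases hu : u ∈ Z
      · rw [if_pos hu]
        have : {w | (u ∈ Z) ∧ (w ∈ T ∧ Col I u w)}
            = {w | Col I w x ∧ Col I w y ∧ Col I w u} := by
          ext w
          simp only [Set.mem_setOf_eq, hT]
          constructor
          · rintro ⟨_, ⟨h1, h2⟩, h3⟩; exact ⟨h1, h2, col_symm h3⟩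
          · rintro ⟨h1, h2, h3⟩; exact ⟨hu, ⟨h1, h2⟩, col_symm h3⟩
        rw [this]
      · rw [if_neg hu]
        apply ncard_eq_zero_of_not; rintro w ⟨h, _⟩; exact hu h
    have rhs : ∑ w : P, {u | (u ∈ Z) ∧ (w ∈ T ∧ Col I u w)}.ncard
        = (t + 1) * ((t - 1) * s) := by
      have hTcard : T.ncard = t + 1 := perp_ncard G hxy
      rw [← hTcard]
      apply sum_fiber_const
      · intro w hw
        have : {u | (u ∈ Z) ∧ (w ∈ T ∧ Col I u w)} = {u | u ∈ Z ∧ Col I u w} := by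
          ext u; simp only [Set.mem_setOf_eq]; tauto
        rw [this]; exact fiberT w hw
      · intro w hw; apply ncard_eq_zero_of_not; rintro u ⟨_, h, _⟩; exact hw h
    rw [← lhs, key, rhs]
  -- second moment
  have E2 : ∑ u : P, (if u ∈ Z then c u * (c u - 1) else 0) = (t + 1) * t * (t - 1) := by
    have key := double_count (fun (u : P) (p : P × P) =>
      (u ∈ Z) ∧ (p.1 ∈ T ∧ p.2 ∈ T ∧ p.1 ≠ p.2 ∧ Col I u p.1 ∧ Col I u p.2))
    have lhs : ∑ u : P, {p : P × P | (u ∈ Z) ∧ (p.1 ∈ T ∧ p.2 ∈ T ∧ p.1 ≠ p.2 ∧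
        Col I u p.1 ∧ Col I u p.2)}.ncard = ∑ u : P, (if u ∈ Z then c u * (c u - 1) else 0) := by
      apply Finset.sum_congr rfl
      intro u _
      by_cases hu : u ∈ Z
      · rw [if_pos hu]
        have hset : {p : P × P | (u ∈ Z) ∧ (p.1 ∈ T ∧ p.2 ∈ T ∧ p.1 ≠ p.2 ∧
            Col I u p.1 ∧ Col I u p.2)}
            = {p : P × P | p.1 ∈ {w | Col I w x ∧ Col I w y ∧ Col I w u}
              ∧ p.2 ∈ {w | Col I w x ∧ Col I w y ∧ Col I w u} ∧ p.1 ≠ p.2} := by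
          ext p
          simp only [Set.mem_setOf_eq, hT]
          constructor
          · rintro ⟨_, ⟨h1, h2⟩, ⟨h3, h4⟩, h5, h6, h7⟩
            exact ⟨⟨h1, h2, col_symm h6⟩, ⟨h3, h4, col_symm h7⟩, h5⟩
          · rintro ⟨⟨h1, h2, h3⟩, ⟨h4, h5, h6⟩, h7⟩
            exact ⟨hu, ⟨h1, h2⟩, ⟨h4, h5⟩, h7, col_symm h3, col_symm h6⟩
        rw [hset, ncard_offdiag]
      · rw [if_neg hu]
        apply ncard_eq_zero_of_not; rintro p ⟨h, _⟩; exact hu h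
    have rhs : ∑ p : P × P, {u | (u ∈ Z) ∧ (p.1 ∈ T ∧ p.2 ∈ T ∧ p.1 ≠ p.2 ∧
        Col I u p.1 ∧ Col I u p.2)}.ncard = (t + 1) * t * (t - 1) := by
      have hoff : {p : P × P | p.1 ∈ T ∧ p.2 ∈ T ∧ p.1 ≠ p.2}.ncard = (t+1) * t := by
        rw [ncard_offdiag, perp_ncard G hxy, Nat.add_sub_cancel]
      rw [show (t+1)*t*(t-1) = ((t+1)*t) * (t-1) by ring, ← hoff]
      apply sum_fiber_const
      · rintro p ⟨hp1, hp2, hpne⟩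
        have hnc : ¬ Col I p.1 p.2 := perp_noncol G hxy hp1 hp2 hpne
        have hset : {u | (u ∈ Z) ∧ (p.1 ∈ T ∧ p.2 ∈ T ∧ p.1 ≠ p.2 ∧
            Col I u p.1 ∧ Col I u p.2)}
            = {v | Col I v p.1 ∧ Col I v p.2} \ {x, y} := by
          ext u
          simp only [Set.mem_setOf_eq, Set.mem_diff, Set.mem_insert_iff,
            Set.mem_singleton_iff, hZ]
          constructor
          · rintro ⟨⟨hux, huy⟩, _, _, _, h6, h7⟩
            refine ⟨⟨h6, h7⟩, ?_⟩
            rintro (rfl | rfl)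
            · obtain ⟨l, hl⟩ := exists_line G u; exact hux ⟨l, hl, hl⟩
            · obtain ⟨l, hl⟩ := exists_line G u; exact huy ⟨l, hl, hl⟩
          · rintro ⟨⟨h6, h7⟩, hne⟩
            have hxp : x ∈ {v | Col I v p.1 ∧ Col I v p.2} := by
              exact ⟨col_symm hp1.1, col_symm hp2.1⟩
            have hyp : y ∈ {v | Col I v p.1 ∧ Col I v p.2} := by
              exact ⟨col_symm hp1.2, col_symm hp2.2⟩
            have hnex : u ≠ x := fun h => hne (Or.inl h)
            have hney : u ≠ y := fun h => hne (Or.inr h)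
            exact ⟨⟨perp_noncol G hnc ⟨h6, h7⟩ hxp hnex,
              perp_noncol G hnc ⟨h6, h7⟩ hyp hney⟩, hp1, hp2, hpne, h6, h7⟩
        rw [hset]
        have hxy' : x ≠ y := by rintro rfl; obtain ⟨l, hl⟩ := exists_line G x; exact hxy ⟨l, hl, hl⟩
        have hsub : {x, y} ⊆ {v | Col I v p.1 ∧ Col I v p.2} := by
          rintro v (rfl | rfl)
          · exact ⟨col_symm hp1.1, col_symm hp2.1⟩
          · exact ⟨col_symm hp1.2, col_symm hp2.2⟩
        rw [Set.ncard_diff hsub (Set.toFinite _), perp_ncard G hnc, Set.ncard_pair hxy']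
        omega
      · intro p hp; apply ncard_eq_zero_of_not; rintro u ⟨_, h1, h2, h3, _⟩
        exact hp ⟨h1, h2, h3⟩
    rw [← lhs, key, rhs]
  -- size of Z
  have hZcard : (Z.ncard : ℤ) = ((s:ℤ)+1) * ((s:ℤ)*t+1) + (t+1) - 2 * (1 + (t+1)*s) := by
    have n1 : {u | Col I u x}.ncard = 1 + (t+1) * s := perp_pt_ncard G x
    have n2 : {u | Col I u y}.ncard = 1 + (t+1) * s := perp_pt_ncard G y
    have n4 : ({u | Col I u x} ∩ {u | Col I u y}).ncard = t + 1 := by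
      have : {u | Col I u x} ∩ {u | Col I u y} = T := by
        ext u; simp only [Set.mem_inter_iff, Set.mem_setOf_eq, hT]
      rw [this]; exact perp_ncard G hxy
    have n3 := Set.ncard_union_add_ncard_inter {u | Col I u x} {u | Col I u y}
    have n5 : Z.ncard + ({u | Col I u x} ∪ {u | Col I u y}).ncard = Nat.card P := by
      have hcompl : Z = ({u | Col I u x} ∪ {u | Col I u y})ᶜ := by
        ext u; simp only [hZ, Set.mem_setOf_eq, Set.mem_compl_iff, Set.mem_union]
        tauto
      have h2 := Set.ncard_add_ncard_compl ({u | Col I u x} ∪ {u | Col I u y})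
      rw [hcompl]; omega
    have n6 : Nat.card P = (s+1) * (s*t+1) := card_points G ⟨x⟩
    rw [n6] at n5
    rw [n1, n2, n4] at n3
    zify at n3 n5
    linarith
  -- conclude: variance is zero
  classical
  have hzZ : z ∈ Z := ⟨fun h => hxz (col_symm h), fun h => hyz (col_symm h)⟩
  have hgoal : ∀ u ∈ Z, c u = s + 1 := by
    have hsq : ∑ u : P, (if u ∈ Z then ((c u : ℤ) - (s+1))^2 else 0) = 0 := by
      have h0 : ∑ u : P, (if u ∈ Z then (1:ℤ) else 0) = (Z.ncard : ℤ) := by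
        have h := sum_ite_ncard Z 1
        rw [mul_one] at h
        exact_mod_cast h
      have h1 : ∑ u : P, (if u ∈ Z then ((c u : ℕ) : ℤ) else 0)
          = ((t:ℤ)+1) * (((t:ℤ)-1) * s) := by
        have h : ((∑ u : P, if u ∈ Z then c u else 0 : ℕ) : ℤ)
            = (((t+1) * ((t-1) * s) : ℕ) : ℤ) := by exact_mod_cast E1
        push_cast [Nat.cast_sub ht1] at h
        convert h using 2
      have h2 : ∑ u : P, (if u ∈ Z then ((c u * (c u - 1) : ℕ) : ℤ) else 0)
          = ((t:ℤ)+1) * t * ((t:ℤ)-1) := by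
        have h : ((∑ u : P, if u ∈ Z then c u * (c u - 1) else 0 : ℕ) : ℤ)
            = (((t+1) * t * (t-1) : ℕ) : ℤ) := by exact_mod_cast E2
        push_cast [Nat.cast_sub ht1] at h
        convert h using 2
        simp only [Nat.cast_mul]
      have expand : ∀ u : P, (if u ∈ Z then ((c u : ℤ) - (s+1))^2 else 0)
          = (if u ∈ Z then ((c u * (c u - 1) : ℕ) : ℤ) else 0)
            + (if u ∈ Z then ((c u : ℕ) : ℤ) else 0)
            - (2*((s:ℤ)+1)) * (if u ∈ Z then ((c u : ℕ) : ℤ) else 0)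
            + ((s:ℤ)+1)^2 * (if u ∈ Z then (1:ℤ) else 0) := by
        intro u
        by_cases hu : u ∈ Z
        · simp only [hu, if_true]
          have hcc : ((c u * (c u - 1) : ℕ) : ℤ) = (c u : ℤ) * ((c u : ℤ) - 1) := by
            rcases Nat.eq_zero_or_pos (c u) with h | h
            · simp [h]
            · push_cast [Nat.cast_sub h]; ring
          rw [hcc]; ring
        · simp [hu]
      rw [Finset.sum_congr rfl (fun u _ => expand u)]
      rw [Finset.sum_add_distrib, Finset.sum_sub_distrib, Finset.sum_add_distrib,
        ← Finset.mul_sum, ← Finset.mul_sum, h0, h1, h2, hZcard]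
      subst ht
      push_cast
      ring
    have hnonneg : ∀ u ∈ Finset.univ, (0:ℤ) ≤ (if u ∈ Z then ((c u : ℤ) - (s+1))^2 else 0) := by
      intro u _
      by_cases hu : u ∈ Z
      · simp only [hu, if_true]; positivity
      · simp [hu]
    intro u hu
    have := (Finset.sum_eq_zero_iff_of_nonneg hnonneg).1 hsq u (Finset.mem_univ u)
    rw [if_pos hu] at this
    have h2 : (c u : ℤ) = (s:ℤ)+1 := by
      have := sq_eq_zero_iff.1 this
      linarith
    exact_mod_cast h2
  have := hgoal z hzZ
  rw [hc] at this
  exact this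

end Triad

end GQAux

open GQAux

/-- Main theorem: let `Γ` be a GQ of order `(q²,q)` with a doubly subtended
subquadrangle `Γ'` of order `(q,q)` (witnessed by the involutory automorphism
`(σP, σL)` fixing `Γ'` pointwise and moving every external point and external line),
and let `R` be a nontrivial relative `m`-cover (`0 < m < q`).  Then `q` is even,
`m = q/2`, and the image of `R` under the involution is the complement of `R` in the
set of external lines. -/
theorem statement_14 {P L : Type*} [Fintype P] [Fintype L] {I : P → L → Prop} {q m : ℕ}
    (hq : 2 ≤ q)
    (hΓ : GenQuad P L I (q ^ 2) q)
    (P' : Set P) (L' : Set L) (hPne : P'.Nonempty)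
    (hPproper : P' ≠ Set.univ) (hLproper : L' ≠ Set.univ)
    (hsub : GenQuad P' L' (fun p l => I p.1 l.1) q q)
    (hlines : ∀ p ∈ P', ∀ l : L, I p l → l ∈ L')
    (σP : P ≃ P) (σL : L ≃ L)
    (hσI : ∀ (p : P) (l : L), I p l ↔ I (σP p) (σL l))
    (hσP2 : ∀ p, σP (σP p) = p) (hσL2 : ∀ l, σL (σL l) = l)
    (hσfix : ∀ p ∈ P', σP p = p)
    (hσmoveP : ∀ p : P, p ∉ P' → σP p ≠ p)
    (hσmoveL : ∀ l : L, (∀ p ∈ P', ¬ I p l) → σL l ≠ l)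
    (R : Set L) (hRext : ∀ l ∈ R, ∀ p ∈ P', ¬ I p l)
    (hcover : ∀ p : P, p ∉ P' → {l ∈ R | I p l}.ncard = m)
    (hm0 : 0 < m) (hmq : m < q) :
    Even q ∧ 2 * m = q ∧ σL '' R = {l : L | ∀ p ∈ P', ¬ I p l} \ R := by
  classical
  -- external lines
  set E : Set L := {l : L | ∀ p ∈ P', ¬ I p l} with hE
  -- (1) σ preserves externality
  have hσPmem : ∀ x, x ∉ P' → σP x ∉ P' := by
    intro x hx h
    have h2 := hσfix _ h
    rw [hσP2] at h2
    exact hσmoveP x hx h2.symm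
  have hIσ : ∀ p l, I (σP p) (σL l) → I p l := fun p l h => (hσI p l).2 h
  have hσext : ∀ l ∈ E, σL l ∈ E := by
    intro l hl p hp hIp
    have h1 : I (σP p) (σL (σL l)) := (hσI p (σL l)).1 hIp
    rw [hσL2, hσfix p hp] at h1
    exact hl p hp h1
  -- (2) lines of L' are fixed by σ
  have hLfix : ∀ l ∈ L', σL l = l := by
    intro l hl
    have hcard := hsub.line_points ⟨l, hl⟩
    have h2 : 1 < {p : P' | I p.1 l}.ncard := by rw [hcard]; omega
    obtain ⟨p₁, p₂, hp₁, hp₂, hne⟩ := (Set.one_lt_ncard_iff (Set.toFinite _)).1 h2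
    have hne' : (p₁ : P) ≠ (p₂ : P) := fun h => hne (Subtype.ext h)
    have hσ1 : I (p₁ : P) (σL l) := by
      have := (hσI p₁ l).1 hp₁; rwa [hσfix _ p₁.2] at this
    have hσ2 : I (p₂ : P) (σL l) := by
      have := (hσI p₂ l).1 hp₂; rwa [hσfix _ p₂.2] at this
    exact (hΓ.unique_line hne' hσ1 hσ2 hp₁ hp₂)
  -- (3) every line is in L' or external
  have hnotL'ext : ∀ l, l ∉ L' → l ∈ E := by
    intro l hl p hp hI; exact hl (hlines p hp l hI)
  have hL'notext : ∀ l ∈ L', l ∉ E := by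
    intro l hl hlE
    have hcard := hsub.line_points ⟨l, hl⟩
    have h2 : 0 < {p : P' | I p.1 l}.ncard := by rw [hcard]; omega
    obtain ⟨p, hp⟩ := (Set.ncard_pos (Set.toFinite _)).1 h2
    exact hlE p p.2 hp
  have hRE : R ⊆ E := fun l hl => hRext l hl
  -- (4) at most one L'-line through an external point
  have hatmost : ∀ x, x ∉ P' → ∀ l₁ l₂, l₁ ∈ L' → l₂ ∈ L' → I x l₁ → I x l₂ → l₁ = l₂ := by
    intro x hx l₁ l₂ h1 h2 hx1 hx2
    have hσx1 : I (σP x) l₁ := by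
      have := (hσI x l₁).1 hx1; rwa [hLfix l₁ h1] at this
    have hσx2 : I (σP x) l₂ := by
      have := (hσI x l₂).1 hx2; rwa [hLfix l₂ h2] at this
    exact hΓ.unique_line (Ne.symm (hσmoveP x hx)) hx1 hσx1 hx2 hσx2
  -- (5) number of points of Γ'
  have hP'card : P'.ncard = (q+1) * (q^2+1) := by
    obtain ⟨p₀, hp₀⟩ := hPne
    have := card_points hsub ⟨⟨p₀, hp₀⟩⟩
    rw [← Nat.card_coe_set_eq, this]
    ring
  -- (6) each L'-line has q+1 points of P'
  have hL'pts : ∀ l ∈ L', {p | p ∈ P' ∧ I p l}.ncard = q + 1 := by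
    intro l hl
    have hcard := hsub.line_points ⟨l, hl⟩
    have himg : {p | p ∈ P' ∧ I p l} = Subtype.val '' {p : P' | I p.1 l} := by
      ext p
      simp only [Set.mem_setOf_eq, Set.mem_image, Subtype.exists, exists_and_right,
        exists_eq_right]
      tauto
    rw [himg, Set.ncard_image_of_injective _ Subtype.val_injective, hcard]
  -- (7) for external l there are q²+1 lines of L' meeting l
  have hM9 : ∀ l ∈ E, {N | N ∈ L' ∧ ∃ r, I r N ∧ I r l}.ncard = q^2 + 1 := by
    intro l hl
    have key := double_count (fun (p : P) (N : L) =>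
      (p ∈ P') ∧ (I p N ∧ ∃ r, I r N ∧ I r l))
    have lhs : ∑ p : P, {N | (p ∈ P') ∧ (I p N ∧ ∃ r, I r N ∧ I r l)}.ncard
        = P'.ncard * 1 := by
      apply sum_fiber_const
      · intro p hp
        apply ncard_eq_one_of_exists_unique
        have hpl : ¬ I p l := hl p hp
        obtain ⟨n, ⟨hpn, r, hrl, hrn⟩, hun⟩ := (dual hΓ).gq l p hpl
        refine ⟨n, ⟨hp, hpn, r, hrn, hrl⟩, ?_⟩
        rintro n' ⟨_, hpn', r', hr'n', hr'l⟩
        exact hun n' ⟨hpn', r', hr'l, hr'n'⟩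
      · intro p hp; apply ncard_eq_zero_of_not; rintro N ⟨h, _⟩; exact hp h
    have rhs : ∑ N : L, {p | (p ∈ P') ∧ (I p N ∧ ∃ r, I r N ∧ I r l)}.ncard
        = {N | N ∈ L' ∧ ∃ r, I r N ∧ I r l}.ncard * (q+1) := by
      apply sum_fiber_const
      · rintro N ⟨hN, hmeet⟩
        have hset : {p | (p ∈ P') ∧ (I p N ∧ ∃ r, I r N ∧ I r l)} = {p | p ∈ P' ∧ I p N} := by
          ext p; simp only [Set.mem_setOf_eq]; tauto
        rw [hset]; exact hL'pts N hN
      · intro N hN; apply ncard_eq_zero_of_not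
        rintro p ⟨hp, hpN, hmeet⟩
        exact hN ⟨hlines p hp N hpN, hmeet⟩
    rw [lhs, rhs, mul_one, hP'card] at key
    have hq1 : 0 < q + 1 := by omega
    apply Nat.eq_of_mul_eq_mul_left hq1
    rw [mul_comm (q+1) _]
    exact key.symm
  -- at most one L'-line through a point of an external line
  have hle1 : ∀ l ∈ E, ∀ x, I x l → {N | N ∈ L' ∧ I x N}.ncard ≤ 1 := by
    intro l hl x hxl
    by_contra hgt
    push_neg at hgt
    obtain ⟨N₁, N₂, h1, h2, hne⟩ := (Set.one_lt_ncard_iff (Set.toFinite _)).1 hgt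
    have hxP : x ∉ P' := fun hx => hl x hx hxl
    exact hne (hatmost x hxP N₁ N₂ h1.1 h2.1 h1.2 h2.2)
  -- (8) exactly one L'-line through each point of an external line
  have hM10 : ∀ l ∈ E, ∀ x, I x l → ∃! N, N ∈ L' ∧ I x N := by
    intro l hl x hxl
    have key := double_count (fun (x' : P) (N : L) => I x' l ∧ (N ∈ L' ∧ I x' N))
    have rhs : ∑ N : L, {x' | I x' l ∧ (N ∈ L' ∧ I x' N)}.ncard
        = {N | N ∈ L' ∧ ∃ r, I r N ∧ I r l}.ncard * 1 := by
      apply sum_fiber_const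
      · rintro N ⟨hN, r, hrN, hrl⟩
        apply ncard_eq_one_of_exists_unique
        have hNl : N ≠ l := fun h => hL'notext N hN (h ▸ hl)
        refine ⟨r, ⟨hrl, hN, hrN⟩, ?_⟩
        rintro r' ⟨hr'l, _, hr'N⟩
        exact pt_unique hΓ hNl hr'N hr'l hrN hrl
      · intro N hN; apply ncard_eq_zero_of_not
        rintro x' ⟨hxl', hNL, hxN'⟩
        exact hN ⟨hNL, x', hxN', hxl'⟩
    have lhs : ∑ x' : P, {N | I x' l ∧ (N ∈ L' ∧ I x' N)}.ncard
        = ∑ x' : P, (if I x' l then {N | N ∈ L' ∧ I x' N}.ncard else 0) := by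
      apply Finset.sum_congr rfl
      intro x' _
      by_cases hx' : I x' l
      · rw [if_pos hx']
        congr 1
        ext N; simp only [Set.mem_setOf_eq]; tauto
      · rw [if_neg hx']
        apply ncard_eq_zero_of_not; rintro N ⟨h, _⟩; exact hx' h
    rw [lhs, rhs, mul_one, hM9 l hl] at key
    have hsum : ∑ x' ∈ Finset.univ.filter (fun x' => I x' l),
        {N | N ∈ L' ∧ I x' N}.ncard = (Finset.univ.filter (fun x' => I x' l)).card := by
      rw [← Finset.sum_filter] at key
      rw [key, ← ncard_eq_filter, hΓ.line_points l]
    have hall := all_eq_one (F := Finset.univ.filter (fun x' => I x' l))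
      (f := fun x' => {N | N ∈ L' ∧ I x' N}.ncard)
      (fun x' hx' => hle1 l hl x' (Finset.mem_filter.1 hx').2) hsum
    have hx1 : {N | N ∈ L' ∧ I x N}.ncard = 1 :=
      hall x (Finset.mem_filter.2 ⟨Finset.mem_univ x, hxl⟩)
    obtain ⟨N, hN⟩ := Set.ncard_eq_one.1 hx1
    refine ⟨N, ?_, ?_⟩
    · have : N ∈ {N | N ∈ L' ∧ I x N} := by rw [hN]; exact rfl
      exact this
    · intro N' hN'
      have : N' ∈ {N | N ∈ L' ∧ I x N} := hN'
      rw [hN] at this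
      exact this
  -- (9) for a point on an external line, its L'-line joins x to σx
  have hMx : ∀ l ∈ E, ∀ x, I x l → ∃ N, N ∈ L' ∧ I x N ∧ I (σP x) N ∧ σL N = N := by
    intro l hl x hxl
    obtain ⟨N, ⟨hNL, hxN⟩, _⟩ := hM10 l hl x hxl
    have hfix := hLfix N hNL
    have hσxN : I (σP x) N := by
      have := (hσI x N).1 hxN; rwa [hfix] at this
    exact ⟨N, hNL, hxN, hσxN, hfix⟩
  -- (10) l and σl are disjoint for external l
  have hM12 : ∀ l ∈ E, ∀ z, I z l → I z (σL l) → False := by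
    intro l hl z hzl hzσl
    have hzP : z ∉ P' := fun hz => hl z hz hzl
    have h1 : I (σP z) (σL l) := (hσI z l).1 hzl
    have h2 : I (σP z) l := by
      have := (hσI z (σL l)).1 hzσl; rwa [hσL2] at this
    exact hσmoveL l hl (hΓ.unique_line (Ne.symm (hσmoveP z hzP)) hzσl h1 hzl h2)
  -- (11) no external line meets both l and σl
  have hM11 : ∀ l ∈ E, ∀ s' ∈ E, (∃ u, I u s' ∧ I u l) → (∃ w, I w s' ∧ I w (σL l)) → False := by
    intro l hl s' hs' ⟨u, hus, hul⟩ ⟨w, hws, hwσl⟩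
    have huP : u ∉ P' := fun hu => hl u hu hul
    have huσl : ¬ I u (σL l) := fun h => hM12 l hl u hul h
    obtain ⟨N, hNL, huN, hσuN, hNfix⟩ := hMx l hl u hul
    have hσuσl : I (σP u) (σL l) := (hσI u l).1 hul
    obtain ⟨r, _, hru⟩ := gq_col hΓ huσl
    have hw : w = σP u := by
      have e1 := hru w ⟨hwσl, s', hus, hws⟩
      have e2 := hru (σP u) ⟨hσuσl, N, huN, hσuN⟩
      rw [e1, e2]
    subst hw
    have hsN : s' = N := hΓ.unique_line (Ne.symm (hσmoveP u huP)) hus hws huN hσuN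
    exact hL'notext N hNL (hsN ▸ hs')
  -- (12) triad regularity via the dual GQ
  have hM15 : ∀ l ∈ E, ∀ s', s' ∈ E →
      (¬ ∃ u, I u s' ∧ I u l) → (¬ ∃ u, I u s' ∧ I u (σL l)) →
      {N | N ∈ L' ∧ (∃ r, I r N ∧ I r l) ∧ (∃ r, I r N ∧ I r s')}.ncard = q + 1 := by
    intro l hl s' hs' hnl hnσl
    have hq1 : 1 ≤ q := by omega
    have h1 : ¬ Col (fun l p => I p l) l (σL l) := by
      rintro ⟨p, hpl, hpσl⟩; exact hM12 l hl p hpl hpσl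
    have h2 : ¬ Col (fun l p => I p l) l s' := by
      rintro ⟨p, hpl, hps'⟩; exact hnl ⟨p, hps', hpl⟩
    have h3 : ¬ Col (fun l p => I p l) (σL l) s' := by
      rintro ⟨p, hpσl, hps'⟩; exact hnσl ⟨p, hps', hpσl⟩
    have htriad := triad_regular (dual hΓ) hq1 h1 h2 h3
    have hset : {w : L | Col (fun l p => I p l) w l ∧ Col (fun l p => I p l) w (σL l)
        ∧ Col (fun l p => I p l) w s'}
        = {N | N ∈ L' ∧ (∃ r, I r N ∧ I r l) ∧ (∃ r, I r N ∧ I r s')} := by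
      ext N
      simp only [Set.mem_setOf_eq, Col]
      constructor
      · rintro ⟨⟨u, huN, hul⟩, ⟨w, hwN, hwσl⟩, ⟨y, hyN, hys'⟩⟩
        have hNL : N ∈ L' := by
          by_contra hNL
          exact hM11 l hl N (hnotL'ext N hNL) ⟨u, huN, hul⟩ ⟨w, hwN, hwσl⟩
        exact ⟨hNL, ⟨u, huN, hul⟩, ⟨y, hyN, hys'⟩⟩
      · rintro ⟨hNL, ⟨u, huN, hul⟩, hmeet⟩
        have hfix := hLfix N hNL
        have hσuN : I (σP u) N := by
          have := (hσI u N).1 huN; rwa [hfix] at this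
        have hσuσl : I (σP u) (σL l) := (hσI u l).1 hul
        exact ⟨⟨u, huN, hul⟩, ⟨σP u, hσuN, hσuσl⟩, hmeet⟩
    rw [← hset]; exact htriad
  -- (13) number of R-lines meeting a fixed L'-line
  have hRmeet : ∀ N ∈ L', {s' | s' ∈ R ∧ ∃ y, I y N ∧ I y s'}.ncard = (q^2 - q) * m := by
    intro N hN
    have key := double_count (fun (y : P) (s' : L) =>
      (I y N ∧ y ∉ P') ∧ (s' ∈ R ∧ I y s'))
    have hD : {y | I y N ∧ y ∉ P'}.ncard = q^2 - q := by
      have hu : {y | y ∈ P' ∧ I y N} ∪ {y | I y N ∧ y ∉ P'} = {y | I y N} := by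
        ext y; simp only [Set.mem_union, Set.mem_setOf_eq]; tauto
      have hd : Disjoint {y | y ∈ P' ∧ I y N} {y | I y N ∧ y ∉ P'} := by
        rw [Set.disjoint_left]; rintro y ⟨h1, _⟩ ⟨_, h2⟩; exact h2 h1
      have hun := Set.ncard_union_eq hd (Set.toFinite _) (Set.toFinite _)
      rw [hu, hΓ.line_points N, hL'pts N hN] at hun
      omega
    have lhs : ∑ y : P, {s' | (I y N ∧ y ∉ P') ∧ (s' ∈ R ∧ I y s')}.ncard
        = (q^2 - q) * m := by
      rw [← hD]
      apply sum_fiber_const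
      · rintro y ⟨hyN, hyP⟩
        have hset : {s' | (I y N ∧ y ∉ P') ∧ (s' ∈ R ∧ I y s')} = {s' | s' ∈ R ∧ I y s'} := by
          ext s'; simp only [Set.mem_setOf_eq]; tauto
        rw [hset]; exact hcover y hyP
      · intro y hy; apply ncard_eq_zero_of_not; rintro s' ⟨h, _⟩; exact hy h
    have rhs : ∑ s' : L, {y | (I y N ∧ y ∉ P') ∧ (s' ∈ R ∧ I y s')}.ncard
        = {s' | s' ∈ R ∧ ∃ y, I y N ∧ I y s'}.ncard * 1 := by
      apply sum_fiber_const
      · rintro s' ⟨hs'R, y₀, hy₀N, hy₀s'⟩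
        apply ncard_eq_one_of_exists_unique
        have hy₀P : y₀ ∉ P' := fun hy => hRext s' hs'R y₀ hy hy₀s'
        have hNs' : N ≠ s' := fun h => hL'notext N hN (h ▸ hRE hs'R)
        refine ⟨y₀, ⟨⟨hy₀N, hy₀P⟩, hs'R, hy₀s'⟩, ?_⟩
        rintro y' ⟨⟨hy'N, _⟩, _, hy's'⟩
        exact pt_unique hΓ hNs' hy'N hy's' hy₀N hy₀s'
      · intro s' hs'; apply ncard_eq_zero_of_not
        rintro y ⟨⟨hyN, _⟩, hs'R, hys'⟩
        exact hs' ⟨hs'R, y, hyN, hys'⟩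
    rw [lhs, rhs, mul_one] at key
    exact key.symm
  -- (14) an R-line meeting N and touching l must pass through the foot point
  have hfoot : ∀ l ∈ E, ∀ N, N ∈ L' → ∀ u, I u N → I u l → ∀ s' ∈ R,
      (∃ y, I y N ∧ I y s') → (∃ w, I w s' ∧ I w l) → I u s' := by
    intro l hl N hN u huN hul s' hs'R ⟨y, hyN, hys'⟩ ⟨w, hws', hwl⟩
    have hNl : N ≠ l := fun h => hL'notext N hN (h ▸ hl)
    by_cases hyu : y = u
    · exact hyu ▸ hys'
    · have hyl : ¬ I y l := by
        intro hyl
        exact hyu (pt_unique hΓ hNl hyN hyl huN hul)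
      obtain ⟨r, _, hru⟩ := gq_col hΓ hyl
      have hwu : w = u := by
        have e1 := hru w ⟨hwl, s', hys', hws'⟩
        have e2 := hru u ⟨hul, N, hyN, huN⟩
        rw [e1, e2]
      exact hwu ▸ hws'
  -- (15) the D-count: number of R-lines disjoint from l ∪ σl
  have hDcount : ∀ l ∈ E,
      {s' | s' ∈ R ∧ (¬ ∃ u, I u s' ∧ I u l) ∧ (¬ ∃ u, I u s' ∧ I u (σL l))}.ncard
      = (q^2+1) * ((q-2) * m) := by
    intro l hl
    set Dst : Set L := {s' | s' ∈ R ∧ (¬ ∃ u, I u s' ∧ I u l) ∧ (¬ ∃ u, I u s' ∧ I u (σL l))}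
      with hDst
    have key := double_count (fun (s' : L) (N : L) =>
      (s' ∈ Dst) ∧ (N ∈ L' ∧ (∃ r, I r N ∧ I r l) ∧ (∃ r, I r N ∧ I r s')))
    have lhs : ∑ s' : L, {N | (s' ∈ Dst) ∧ (N ∈ L' ∧ (∃ r, I r N ∧ I r l)
        ∧ (∃ r, I r N ∧ I r s'))}.ncard = Dst.ncard * (q+1) := by
      apply sum_fiber_const
      · rintro s' hs'
        obtain ⟨hs'R, hnl, hnσl⟩ := hs'
        have hset : {N | (s' ∈ Dst) ∧ (N ∈ L' ∧ (∃ r, I r N ∧ I r l) ∧ (∃ r, I r N ∧ I r s'))}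
            = {N | N ∈ L' ∧ (∃ r, I r N ∧ I r l) ∧ (∃ r, I r N ∧ I r s')} := by
          ext N; simp only [Set.mem_setOf_eq]
          constructor
          · rintro ⟨_, h⟩; exact h
          · intro h; exact ⟨⟨hs'R, hnl, hnσl⟩, h⟩
        rw [hset]
        refine hM15 l hl s' (hRE hs'R) ?_ ?_
        · rintro ⟨u, hus', hul⟩; exact hnl ⟨u, hus', hul⟩
        · rintro ⟨u, hus', huσl⟩; exact hnσl ⟨u, hus', huσl⟩
      · intro s' hs'; apply ncard_eq_zero_of_not; rintro N ⟨h, _⟩; exact hs' h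
    have rhs : ∑ N : L, {s' | (s' ∈ Dst) ∧ (N ∈ L' ∧ (∃ r, I r N ∧ I r l)
        ∧ (∃ r, I r N ∧ I r s'))}.ncard = (q^2+1) * ((q^2-q) * m - 2 * m) := by
      rw [← hM9 l hl]
      apply sum_fiber_const
      · rintro N ⟨hNL, u, huN, hul⟩
        have hσuN : I (σP u) N := by
          have := (hσI u N).1 huN; rwa [hLfix N hNL] at this
        have hσuσl : I (σP u) (σL l) := (hσI u l).1 hul
        have huP : u ∉ P' := fun hu => hl u hu hul
        have hσuP : σP u ∉ P' := hσPmem u huP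
        -- partition of the R-lines meeting N
        have hpart : {s' | s' ∈ R ∧ ∃ y, I y N ∧ I y s'}
            = ({s' | (s' ∈ Dst) ∧ (N ∈ L' ∧ (∃ r, I r N ∧ I r l) ∧ (∃ r, I r N ∧ I r s'))}
              ∪ {s' | s' ∈ R ∧ I u s'}) ∪ {s' | s' ∈ R ∧ I (σP u) s'} := by
          ext s'
          simp only [Set.mem_union, Set.mem_setOf_eq]
          constructor
          · rintro ⟨hs'R, hy⟩
            by_cases htl : ∃ w, I w s' ∧ I w l
            · exact Or.inl (Or.inr ⟨hs'R, hfoot l hl N hNL u huN hul s' hs'R hy htl⟩)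
            · by_cases htσl : ∃ w, I w s' ∧ I w (σL l)
              · refine Or.inr ⟨hs'R, hfoot (σL l) (hσext l hl) N hNL (σP u) hσuN hσuσl
                  s' hs'R hy htσl⟩
              · exact Or.inl (Or.inl ⟨⟨hs'R, htl, htσl⟩, hNL, ⟨u, huN, hul⟩,
                  (let ⟨y, h1, h2⟩ := hy; ⟨y, h1, h2⟩)⟩)
          · rintro ((⟨⟨hs'R, _, _⟩, _, _, hm⟩ | ⟨hs'R, hus'⟩) | ⟨hs'R, hσus'⟩)
            · exact ⟨hs'R, hm⟩
            · exact ⟨hs'R, u, huN, hus'⟩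
            · exact ⟨hs'R, σP u, hσuN, hσus'⟩
        have hne : u ≠ σP u := Ne.symm (hσmoveP u huP)
        have hd1 : Disjoint ({s' | (s' ∈ Dst) ∧ (N ∈ L' ∧ (∃ r, I r N ∧ I r l)
            ∧ (∃ r, I r N ∧ I r s'))} ∪ {s' | s' ∈ R ∧ I u s'})
            {s' | s' ∈ R ∧ I (σP u) s'} := by
          rw [Set.disjoint_left]
          rintro s' (⟨⟨_, _, hnσl⟩, _⟩ | ⟨hs'R, hus'⟩) ⟨hs'R2, hσus'⟩
          · exact hnσl ⟨σP u, hσus', hσuσl⟩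
          · have : s' = N := hΓ.unique_line hne hus' hσus' huN hσuN
            exact hL'notext N hNL (this ▸ hRE hs'R)
        have hd2 : Disjoint {s' | (s' ∈ Dst) ∧ (N ∈ L' ∧ (∃ r, I r N ∧ I r l)
            ∧ (∃ r, I r N ∧ I r s'))} {s' | s' ∈ R ∧ I u s'} := by
          rw [Set.disjoint_left]
          rintro s' ⟨⟨_, hnl, _⟩, _⟩ ⟨hs'R, hus'⟩
          exact hnl ⟨u, hus', hul⟩
        have e1 := Set.ncard_union_eq hd1 (Set.toFinite _) (Set.toFinite _)
        have e2 := Set.ncard_union_eq hd2 (Set.toFinite _) (Set.toFinite _)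
        have htot := hRmeet N hNL
        rw [hpart, e1, e2, hcover u huP, hcover (σP u) hσuP] at htot
        have hX : {s' | (s' ∈ Dst) ∧ (N ∈ L' ∧ (∃ r, I r N ∧ I r l)
            ∧ (∃ r, I r N ∧ I r s'))}.ncard + 2 * m = (q^2 - q) * m := by linarith
        exact Nat.eq_sub_of_add_eq hX
      · intro N hN; apply ncard_eq_zero_of_not; rintro s' ⟨_, h⟩
        exact hN ⟨h.1, h.2.1⟩
    rw [lhs, rhs] at key
    have hq1 : 0 < q + 1 := by omega
    apply Nat.eq_of_mul_eq_mul_left hq1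
    have harith : (q^2 - q) * m - 2 * m = (q + 1) * ((q - 2) * m) := by
      have h1 : q^2 - q = q * (q - 1) := by
        cases q with
        | zero => simp
        | succ n => simp [pow_two]; ring_nf; omega
      rw [h1]
      have h2 : q * (q-1) * m - 2 * m = (q * (q-1) - 2) * m := by
        rw [Nat.sub_mul]
      rw [h2]
      have h3 : q * (q - 1) - 2 = (q+1) * (q-2) := by
        obtain ⟨k, hk⟩ : ∃ k, q = k + 2 := ⟨q - 2, by omega⟩
        subst hk
        simp [Nat.add_sub_cancel]
        ring_nf
        omega
      rw [h3, mul_assoc]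
    rw [harith] at key
    rw [mul_comm (q+1) (Dst.ncard)]
    rw [key]
    ring
  -- (16) the per-line equation
  have hS2 : ∀ l ∈ E, {s' | s' ∈ R ∧ s' ≠ l ∧ ∃ u, I u s' ∧ I u l}.ncard
      = (q^2+1) * (m - (if l ∈ R then 1 else 0)) := by
    intro l hl
    have key := double_count (fun (u : P) (s' : L) => I u l ∧ (s' ∈ R ∧ I u s' ∧ s' ≠ l))
    have lhs : ∑ u : P, {s' | I u l ∧ (s' ∈ R ∧ I u s' ∧ s' ≠ l)}.ncard
        = (q^2+1) * (m - (if l ∈ R then 1 else 0)) := by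
      rw [← hΓ.line_points l]
      apply sum_fiber_const
      · intro u hul
        have huP : u ∉ P' := fun hu => hl u hu hul
        have hset : {s' | I u l ∧ (s' ∈ R ∧ I u s' ∧ s' ≠ l)}
            = {s' | (s' ∈ R ∧ I u s') ∧ s' ≠ l} := by
          ext s'; simp only [Set.mem_setOf_eq]; tauto
        rw [hset]
        by_cases hlR : l ∈ R
        · rw [if_pos hlR]
          have hset2 : {s' | (s' ∈ R ∧ I u s') ∧ s' ≠ l} = {s' | s' ∈ R ∧ I u s'} \ {l} := by
            ext s'; simp [and_comm]
          have hmem : l ∈ {s' | s' ∈ R ∧ I u s'} := ⟨hlR, hul⟩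
          rw [hset2, Set.ncard_diff_singleton_of_mem hmem, hcover u huP]
        · rw [if_neg hlR]
          have hset2 : {s' | (s' ∈ R ∧ I u s') ∧ s' ≠ l} = {s' | s' ∈ R ∧ I u s'} := by
            ext s'
            simp only [Set.mem_setOf_eq]
            constructor
            · rintro ⟨h, _⟩; exact h
            · intro h; exact ⟨h, fun he => hlR (he ▸ h.1)⟩
          rw [hset2, hcover u huP]
          omega
      · intro u hu; apply ncard_eq_zero_of_not; rintro s' ⟨h, _⟩; exact hu h
    have rhs : ∑ s' : L, {u | I u l ∧ (s' ∈ R ∧ I u s' ∧ s' ≠ l)}.ncard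
        = {s' | s' ∈ R ∧ s' ≠ l ∧ ∃ u, I u s' ∧ I u l}.ncard * 1 := by
      apply sum_fiber_const
      · rintro s' ⟨hs'R, hs'l, u₀, hu₀s', hu₀l⟩
        apply ncard_eq_one_of_exists_unique
        refine ⟨u₀, ⟨hu₀l, hs'R, hu₀s', hs'l⟩, ?_⟩
        rintro u' ⟨hu'l, _, hu's', _⟩
        exact pt_unique hΓ (Ne.symm hs'l) hu'l hu's' hu₀l hu₀s'
      · intro s' hs'; apply ncard_eq_zero_of_not
        rintro u ⟨hul, hs'R, hus', hs'l⟩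
        exact hs' ⟨hs'R, hs'l, u, hus', hul⟩
    rw [lhs, rhs, mul_one] at key
    exact key.symm
  -- the partition of R relative to an external line l
  have hkey : ∀ l ∈ E, ((q:ℤ)^2) * ((if l ∈ R then (1:ℤ) else 0) + (if σL l ∈ R then (1:ℤ) else 0))
      = ((q:ℤ)^2+1) * (2*(m:ℤ)) + ((q:ℤ)^2+1) * (((q:ℤ)-2)*(m:ℤ)) - (R.ncard : ℤ) := by
    intro l hl
    have hσl : σL l ∈ E := hσext l hl
    have hlσ : l ≠ σL l := Ne.symm (hσmoveL l hl)
    set A2 : Set L := {s' | s' ∈ R ∧ s' ≠ l ∧ ∃ u, I u s' ∧ I u l} with hA2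
    set A3 : Set L := {s' | s' ∈ R ∧ s' ≠ σL l ∧ ∃ u, I u s' ∧ I u (σL l)} with hA3
    set D : Set L := {s' | s' ∈ R ∧ (¬ ∃ u, I u s' ∧ I u l) ∧ (¬ ∃ u, I u s' ∧ I u (σL l))}
      with hD
    set F : Set L := R ∩ {l, σL l} with hF
    have hd1 : Disjoint A2 A3 := by
      rw [Set.disjoint_left]
      rintro s' ⟨hs'R, _, hm1⟩ ⟨_, _, hm2⟩
      exact hM11 l hl s' (hRE hs'R) hm1 hm2
    have hd2 : Disjoint (A2 ∪ A3) D := by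
      rw [Set.disjoint_left]
      rintro s' (⟨_, _, hm⟩ | ⟨_, _, hm⟩) ⟨_, hn1, hn2⟩
      · exact hn1 hm
      · exact hn2 hm
    have hd3 : Disjoint ((A2 ∪ A3) ∪ D) F := by
      rw [Set.disjoint_left]
      rintro s' hs' ⟨hs'R, hmem⟩
      obtain ⟨u₀, hu₀⟩ := exists_point hΓ l
      obtain ⟨w₀, hw₀⟩ := exists_point hΓ (σL l)
      rcases hmem with h | h
      · subst h
        rcases hs' with (⟨_, hne, _⟩ | ⟨_, _, hm⟩) | ⟨_, hn1, _⟩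
        · exact hne rfl
        · exact hM12 _ hl _ (hm.choose_spec.1) (hm.choose_spec.2)
        · exact hn1 ⟨u₀, hu₀, hu₀⟩
      · rw [Set.mem_singleton_iff] at h
        subst h
        rcases hs' with (⟨_, _, hm⟩ | ⟨_, hne, _⟩) | ⟨_, _, hn2⟩
        · obtain ⟨u, hu1, hu2⟩ := hm
          exact hM12 l hl u hu2 hu1
        · exact hne rfl
        · exact hn2 ⟨w₀, hw₀, hw₀⟩
    have hu : ((A2 ∪ A3) ∪ D) ∪ F = R := by
      ext s'
      simp only [Set.mem_union, hA2, hA3, hD, hF, Set.mem_setOf_eq, Set.mem_inter_iff,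
        Set.mem_insert_iff, Set.mem_singleton_iff]
      constructor
      · rintro (((⟨h, _⟩ | ⟨h, _⟩) | ⟨h, _⟩) | ⟨h, _⟩) <;> exact h
      · intro hs'R
        by_cases he1 : s' = l
        · exact Or.inr ⟨hs'R, Or.inl he1⟩
        by_cases he2 : s' = σL l
        · exact Or.inr ⟨hs'R, Or.inr he2⟩
        by_cases hm1 : ∃ u, I u s' ∧ I u l
        · exact Or.inl (Or.inl (Or.inl ⟨hs'R, he1, hm1⟩))
        by_cases hm2 : ∃ u, I u s' ∧ I u (σL l)
        · exact Or.inl (Or.inl (Or.inr ⟨hs'R, he2, hm2⟩))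
        · exact Or.inl (Or.inr ⟨hs'R, hm1, hm2⟩)
    have hnc : R.ncard = A2.ncard + A3.ncard + D.ncard + F.ncard := by
      rw [← hu, Set.ncard_union_eq hd3 (Set.toFinite _) (Set.toFinite _),
        Set.ncard_union_eq hd2 (Set.toFinite _) (Set.toFinite _),
        Set.ncard_union_eq hd1 (Set.toFinite _) (Set.toFinite _)]
    have hFc : F.ncard = (if l ∈ R then 1 else 0) + (if σL l ∈ R then 1 else 0) := by
      by_cases h1 : l ∈ R <;> by_cases h2 : σL l ∈ R
      · have : F = {l, σL l} := by
          ext s'; simp only [hF, Set.mem_inter_iff, Set.mem_insert_iff, Set.mem_singleton_iff]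
          constructor
          · rintro ⟨_, h⟩; exact h
          · rintro (rfl | rfl) <;> simp [h1, h2]
        rw [this, Set.ncard_pair hlσ, if_pos h1, if_pos h2]
      · have : F = {l} := by
          ext s'; simp only [hF, Set.mem_inter_iff, Set.mem_insert_iff, Set.mem_singleton_iff]
          constructor
          · rintro ⟨hR', (rfl | rfl)⟩
            · rfl
            · exact absurd hR' h2
          · rintro rfl; exact ⟨h1, Or.inl rfl⟩
        rw [this, Set.ncard_singleton, if_pos h1, if_neg h2]
      · have : F = {σL l} := by
          ext s'; simp only [hF, Set.mem_inter_iff, Set.mem_insert_iff, Set.mem_singleton_iff]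
          constructor
          · rintro ⟨hR', (rfl | rfl)⟩
            · exact absurd hR' h1
            · rfl
          · rintro rfl; exact ⟨h2, Or.inr rfl⟩
        rw [this, Set.ncard_singleton, if_pos h2, if_neg h1]
      · have : F = ∅ := by
          ext s'; simp only [hF, Set.mem_inter_iff, Set.mem_insert_iff, Set.mem_singleton_iff,
            Set.mem_empty_iff_false, iff_false, not_and]
          rintro hR' (rfl | rfl)
          · exact h1 hR'
          · exact h2 hR'
        rw [this, Set.ncard_empty, if_neg h1, if_neg h2]
    have hA2c := hS2 l hl
    rw [← hA2] at hA2c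
    have hA3c := hS2 (σL l) hσl
    rw [← hA3] at hA3c
    have hDc := hDcount l hl
    rw [← hD] at hDc
    have hi1 : (if l ∈ R then 1 else 0) ≤ m := by split <;> omega
    have hi2 : (if σL l ∈ R then 1 else 0) ≤ m := by split <;> omega
    rw [hA2c, hA3c, hDc, hFc] at hnc
    have h2q : 2 ≤ q := hq
    zify [hi1, hi2, h2q] at hnc
    linear_combination hnc
  -- (17) choose an external point and an external line through it
  obtain ⟨x₀, hx₀⟩ := (Set.ne_univ_iff_exists_notMem P').1 hPproper
  have hlines2 : 1 < {n | I x₀ n}.ncard := by rw [hΓ.point_lines x₀]; omega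
  obtain ⟨n₁, n₂, hn₁, hn₂, hnne⟩ := (Set.one_lt_ncard_iff (Set.toFinite _)).1 hlines2
  have hex : ∃ l₀, l₀ ∈ E ∧ I x₀ l₀ := by
    by_cases h1 : n₁ ∈ L'
    · by_cases h2 : n₂ ∈ L'
      · exact absurd (hatmost x₀ hx₀ n₁ n₂ h1 h2 hn₁ hn₂) hnne
      · exact ⟨n₂, hnotL'ext n₂ h2, hn₂⟩
    · exact ⟨n₁, hnotL'ext n₁ h1, hn₁⟩
  obtain ⟨l₀, hl₀E, hx₀l₀⟩ := hex
  have hELx : {n | I x₀ n ∧ n ∈ E}.ncard = q := by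
    have hsplitu : {n | I x₀ n ∧ n ∈ L'} ∪ {n | I x₀ n ∧ n ∈ E} = {n | I x₀ n} := by
      ext n; simp only [Set.mem_union, Set.mem_setOf_eq]
      constructor
      · rintro (⟨h, _⟩ | ⟨h, _⟩) <;> exact h
      · intro h
        by_cases hn : n ∈ L'
        · exact Or.inl ⟨h, hn⟩
        · exact Or.inr ⟨h, hnotL'ext n hn⟩
    have hdisj : Disjoint {n | I x₀ n ∧ n ∈ L'} {n | I x₀ n ∧ n ∈ E} := by
      rw [Set.disjoint_left]; rintro n ⟨_, h1⟩ ⟨_, h2⟩; exact hL'notext n h1 h2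
    have hL1 : {n | I x₀ n ∧ n ∈ L'}.ncard = 1 := by
      apply ncard_eq_one_of_exists_unique
      obtain ⟨N, ⟨hNL, hxN⟩, hNu⟩ := hM10 l₀ hl₀E x₀ hx₀l₀
      exact ⟨N, ⟨hxN, hNL⟩, fun N' h => hNu N' ⟨h.2, h.1⟩⟩
    have hun := Set.ncard_union_eq hdisj (Set.toFinite _) (Set.toFinite _)
    rw [hsplitu, hΓ.point_lines x₀, hL1] at hun
    omega
  have hsum1 : {n | (I x₀ n ∧ n ∈ E) ∧ n ∈ R}.ncard = m := by
    have hset : {n | (I x₀ n ∧ n ∈ E) ∧ n ∈ R} = {n | n ∈ R ∧ I x₀ n} := by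
      ext n; simp only [Set.mem_setOf_eq]
      constructor
      · rintro ⟨⟨h1, _⟩, h2⟩; exact ⟨h2, h1⟩
      · rintro ⟨h2, h1⟩; exact ⟨⟨h1, hRE h2⟩, h2⟩
    rw [hset]; exact hcover x₀ hx₀
  have hσx₀ : σP x₀ ∉ P' := hσPmem x₀ hx₀
  have hsum2 : {n | (I x₀ n ∧ n ∈ E) ∧ σL n ∈ R}.ncard = m := by
    have himg : σL '' {n | (I x₀ n ∧ n ∈ E) ∧ σL n ∈ R} = {n | n ∈ R ∧ I (σP x₀) n} := by
      ext sl
      simp only [Set.mem_image, Set.mem_setOf_eq]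
      constructor
      · rintro ⟨n, ⟨⟨hxn, hnE⟩, hσnR⟩, rfl⟩
        exact ⟨hσnR, (hσI x₀ n).1 hxn⟩
      · rintro ⟨hsR, hσxs⟩
        refine ⟨σL sl, ⟨⟨?_, hσext sl (hRE hsR)⟩, ?_⟩, hσL2 sl⟩
        · have h := (hσI (σP x₀) sl).1 hσxs
          rwa [hσP2] at h
        · rwa [hσL2]
    have himgc := Set.ncard_image_of_injective {n | (I x₀ n ∧ n ∈ E) ∧ σL n ∈ R} σL.injective
    rw [himg] at himgc
    rw [← himgc]; exact hcover (σP x₀) hσx₀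
  -- (18) conclusion
  set C : ℤ := ((q:ℤ)^2+1) * (2*(m:ℤ)) + ((q:ℤ)^2+1) * (((q:ℤ)-2)*(m:ℤ)) - (R.ncard : ℤ)
    with hCdef
  have hq0 : ((q:ℤ))^2 ≠ 0 := by positivity
  have hsplit : ∑ n : L, (if n ∈ {n | I x₀ n ∧ n ∈ E} then
      ((q:ℤ)^2) * ((if n ∈ R then (1:ℤ) else 0) + (if σL n ∈ R then (1:ℤ) else 0)) else 0)
      = ({n | I x₀ n ∧ n ∈ E}.ncard : ℤ) * C := by
    rw [← sum_ite_const_int {n | I x₀ n ∧ n ∈ E} C]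
    apply Finset.sum_congr rfl
    intro n _
    by_cases hn : n ∈ {n | I x₀ n ∧ n ∈ E}
    · rw [if_pos hn, if_pos hn, hkey n hn.2]
    · rw [if_neg hn, if_neg hn]
  have hval : ∑ n : L, (if n ∈ {n | I x₀ n ∧ n ∈ E} then
      ((q:ℤ)^2) * ((if n ∈ R then (1:ℤ) else 0) + (if σL n ∈ R then (1:ℤ) else 0)) else 0)
      = ((q:ℤ)^2) * (2*(m:ℤ)) := by
    have expand : ∀ n : L, (if n ∈ {n | I x₀ n ∧ n ∈ E} then
        ((q:ℤ)^2) * ((if n ∈ R then (1:ℤ) else 0) + (if σL n ∈ R then (1:ℤ) else 0)) else 0)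
        = (q:ℤ)^2 * ((if n ∈ {n | I x₀ n ∧ n ∈ E} then (if n ∈ R then (1:ℤ) else 0) else 0)
          + (if n ∈ {n | I x₀ n ∧ n ∈ E} then (if σL n ∈ R then (1:ℤ) else 0) else 0)) := by
      intro n
      by_cases hn : n ∈ {n | I x₀ n ∧ n ∈ E}
      · rw [if_pos hn, if_pos hn, if_pos hn]
      · rw [if_neg hn, if_neg hn, if_neg hn]; ring
    rw [Finset.sum_congr rfl (fun n _ => expand n), ← Finset.mul_sum, Finset.sum_add_distrib]
    have hA : ∑ n : L, (if n ∈ {n | I x₀ n ∧ n ∈ E} then (if n ∈ R then (1:ℤ) else 0) else 0)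
        = (m : ℤ) := by
      have hnat := sum_ite_ite {n | I x₀ n ∧ n ∈ E} (fun n => n ∈ R)
      have hseteq : {a | a ∈ {n | I x₀ n ∧ n ∈ E} ∧ a ∈ R} = {n | (I x₀ n ∧ n ∈ E) ∧ n ∈ R} := by
        ext a; simp only [Set.mem_setOf_eq]
      rw [hseteq, hsum1] at hnat
      calc ∑ n : L, (if n ∈ {n | I x₀ n ∧ n ∈ E} then (if n ∈ R then (1:ℤ) else 0) else 0)
          = ((∑ n : L, (if n ∈ {n | I x₀ n ∧ n ∈ E} then (if n ∈ R then 1 else 0) else 0) : ℕ) : ℤ) := by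
            push_cast
            apply Finset.sum_congr rfl
            intro n _
            by_cases h1 : n ∈ {n | I x₀ n ∧ n ∈ E} <;> by_cases h2 : n ∈ R <;>
              simp [h1, h2]
        _ = (m : ℤ) := by rw [hnat]
    have hB : ∑ n : L, (if n ∈ {n | I x₀ n ∧ n ∈ E} then (if σL n ∈ R then (1:ℤ) else 0) else 0)
        = (m : ℤ) := by
      have hnat := sum_ite_ite {n | I x₀ n ∧ n ∈ E} (fun n => σL n ∈ R)
      have hseteq : {a | a ∈ {n | I x₀ n ∧ n ∈ E} ∧ σL a ∈ R}
          = {n | (I x₀ n ∧ n ∈ E) ∧ σL n ∈ R} := by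
        ext a; simp only [Set.mem_setOf_eq]
      rw [hseteq, hsum2] at hnat
      calc ∑ n : L, (if n ∈ {n | I x₀ n ∧ n ∈ E} then (if σL n ∈ R then (1:ℤ) else 0) else 0)
          = ((∑ n : L, (if n ∈ {n | I x₀ n ∧ n ∈ E} then (if σL n ∈ R then 1 else 0) else 0) : ℕ) : ℤ) := by
            push_cast
            apply Finset.sum_congr rfl
            intro n _
            by_cases h1 : n ∈ {n | I x₀ n ∧ n ∈ E} <;> by_cases h2 : σL n ∈ R <;>
              simp [h1, h2]
        _ = (m : ℤ) := by rw [hnat]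
    rw [hA, hB]; ring
  have hqC : (q:ℤ) * C = ((q:ℤ)^2) * (2*(m:ℤ)) := by
    rw [← hval, hsplit, hELx]
  have hfinal : ∀ n ∈ E, (q:ℤ) * ((if n ∈ R then (1:ℤ) else 0) + (if σL n ∈ R then (1:ℤ) else 0))
      = 2 * (m:ℤ) := by
    intro n hn
    have h1 := hkey n hn
    have h2 : ((q:ℤ)^2) * ((q:ℤ) * ((if n ∈ R then (1:ℤ) else 0) + (if σL n ∈ R then (1:ℤ) else 0)))
        = ((q:ℤ)^2) * (2 * (m:ℤ)) := by
      calc ((q:ℤ)^2) * ((q:ℤ) * ((if n ∈ R then (1:ℤ) else 0) + (if σL n ∈ R then (1:ℤ) else 0)))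
          = (q:ℤ) * (((q:ℤ)^2) * ((if n ∈ R then (1:ℤ) else 0) + (if σL n ∈ R then (1:ℤ) else 0))) := by
            ring
        _ = (q:ℤ) * C := by rw [h1]
        _ = ((q:ℤ)^2) * (2 * (m:ℤ)) := hqC
    exact mul_left_cancel₀ hq0 h2
  -- q = 2m
  have h2mq : 2 * m = q := by
    have h := hfinal l₀ hl₀E
    by_cases h1 : l₀ ∈ R <;> by_cases h2 : σL l₀ ∈ R <;>
      simp only [h1, h2, if_true, if_false] at h
    · -- e = 2 : q*2 = 2m → m = q, contradiction
      exfalso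
      have : (q:ℤ) = (m:ℤ) := by linarith
      have : q = m := by exact_mod_cast this
      omega
    · have : 2 * (m:ℤ) = (q:ℤ) := by linarith
      exact_mod_cast this
    · have : 2 * (m:ℤ) = (q:ℤ) := by linarith
      exact_mod_cast this
    · exfalso
      have : (m:ℤ) = 0 := by linarith
      have : m = 0 := by exact_mod_cast this
      omega
  have heps1 : ∀ n ∈ E, (if n ∈ R then (1:ℤ) else 0) + (if σL n ∈ R then (1:ℤ) else 0) = 1 := by
    intro n hn
    have h := hfinal n hn
    have hq2m : (2:ℤ) * m = (q:ℤ) := by exact_mod_cast h2mq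
    have hqz : (q:ℤ) ≠ 0 := by positivity
    apply mul_left_cancel₀ hqz
    rw [h, mul_one, hq2m]
  refine ⟨⟨m, by omega⟩, h2mq, ?_⟩
  ext sl
  simp only [Set.mem_image, Set.mem_diff, Set.mem_setOf_eq]
  constructor
  · rintro ⟨r, hrR, rfl⟩
    have hrE : r ∈ E := hRE hrR
    have h := heps1 r hrE
    rw [if_pos hrR] at h
    have hσr : σL r ∉ R := by
      intro hc
      rw [if_pos hc] at h
      norm_num at h
    constructor
    · exact hσext r hrE
    · exact hσr
  · rintro ⟨hslE, hslR⟩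
    have h := heps1 sl hslE
    rw [if_neg hslR] at h
    have hσsl : σL sl ∈ R := by
      by_contra hc
      rw [if_neg hc] at h
      norm_num at h
    exact ⟨σL sl, hσsl, hσL2 sl⟩
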